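/- Let d ≥ 1, let Q, Q' ∈ O(d) be orthogonal matrices, and let δ > 0 satisfy δ ≤ ‖Q' − Q‖_F² / (12 d). If u is a random vector uniformly distributed on the unit sphere S^{d−1} ⊆ ℝ^d, then the probability that the cones C(Q'u, δ) and C(Qu, δ) intersect only at the origin (i.e., C(Q'u,δ) ∩ C(Qu,δ) ⊆ {0}) is at least δ. -/

import Mathlib

open MeasureTheory Matrix

namespace PW

noncomputable def sqnorm {d : ℕ} (v : Fin d → ℝ) : ℝ := ∑ j, v j ^ 2

noncomputable def vnorm {d : ℕ} (v : Fin d → ℝ) : ℝ := Real.sqrt (sqnorm v)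

/-- The cone of angle `δ` and direction `u`. -/
noncomputable def cone {d : ℕ} (u : Fin d → ℝ) (δ : ℝ) : Set (Fin d → ℝ) :=
  {v | (1 - δ) * vnorm v ≤ ∑ j, u j * v j}

/-- `ν` is the uniform probability measure on the unit sphere of `ℝ^d`: a probability
measure concentrated on the unit sphere and invariant under every orthogonal map. -/
def IsUniformOnSphere {d : ℕ} (ν : Measure (Fin d → ℝ)) : Prop :=
  IsProbabilityMeasure ν ∧ ν {v | sqnorm v = 1} = 1 ∧
    ∀ Q ∈ Matrix.orthogonalGroup (Fin d) ℝ, Measure.map (fun v => Q.mulVec v) ν = ν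

variable {d : ℕ}

lemma sqnorm_nonneg (v : Fin d → ℝ) : 0 ≤ sqnorm v :=
  Finset.sum_nonneg fun _ _ => sq_nonneg _

lemma sq_vnorm (v : Fin d → ℝ) : vnorm v ^ 2 = sqnorm v := Real.sq_sqrt (sqnorm_nonneg v)

lemma transpose_mul_self {Q : Matrix (Fin d) (Fin d) ℝ}
    (hQ : Q ∈ Matrix.orthogonalGroup (Fin d) ℝ) : Qᵀ * Q = 1 := by
  have := Matrix.mem_orthogonalGroup_iff' (Fin d) ℝ |>.mp hQ
  simpa [Matrix.star_eq_conjTranspose, Matrix.conjTranspose] using this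

lemma self_mul_transpose {Q : Matrix (Fin d) (Fin d) ℝ}
    (hQ : Q ∈ Matrix.orthogonalGroup (Fin d) ℝ) : Q * Qᵀ = 1 := by
  have := Matrix.mem_orthogonalGroup_iff (Fin d) ℝ |>.mp hQ
  simpa [Matrix.star_eq_conjTranspose, Matrix.conjTranspose] using this

lemma dot_mulVec_mulVec {Q : Matrix (Fin d) (Fin d) ℝ}
    (hQ : Q ∈ Matrix.orthogonalGroup (Fin d) ℝ) (u v : Fin d → ℝ) :
    ∑ j, Q.mulVec u j * Q.mulVec v j = ∑ j, u j * v j := by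
  have h1 : ∑ j, Q.mulVec u j * Q.mulVec v j = (Q.mulVec u) ⬝ᵥ (Q.mulVec v) := rfl
  rw [h1, Matrix.dotProduct_mulVec, ← Matrix.mulVec_transpose, Matrix.mulVec_mulVec,
    transpose_mul_self hQ, Matrix.one_mulVec]
  rfl

lemma sqnorm_mulVec {Q : Matrix (Fin d) (Fin d) ℝ}
    (hQ : Q ∈ Matrix.orthogonalGroup (Fin d) ℝ) (u : Fin d → ℝ) :
    sqnorm (Q.mulVec u) = sqnorm u := by
  simp only [sqnorm, sq]
  exact dot_mulVec_mulVec hQ u u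

lemma sum_sq_entries {Q : Matrix (Fin d) (Fin d) ℝ}
    (hQ : Q ∈ Matrix.orthogonalGroup (Fin d) ℝ) :
    ∑ i, ∑ j, Q i j ^ 2 = (d : ℝ) := by
  have : ∀ i, ∑ j, Q i j ^ 2 = (Q * Qᵀ) i i := by
    intro i; simp [Matrix.mul_apply, sq]
  simp only [this, self_mul_transpose hQ]
  simp [Matrix.one_apply]




noncomputable def permMat (σ : Equiv.Perm (Fin d)) : Matrix (Fin d) (Fin d) ℝ :=
  fun k l => if σ k = l then 1 else 0

lemma permMat_mulVec (σ : Equiv.Perm (Fin d)) (v : Fin d → ℝ) :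
    (permMat σ).mulVec v = fun k => v (σ k) := by
  funext k
  simp [Matrix.mulVec, dotProduct, permMat, ite_mul]

lemma permMat_mem (σ : Equiv.Perm (Fin d)) :
    permMat σ ∈ Matrix.orthogonalGroup (Fin d) ℝ := by
  rw [Matrix.mem_orthogonalGroup_iff]
  ext k l
  simp only [Matrix.mul_apply, Matrix.star_eq_conjTranspose, Matrix.conjTranspose_apply,
    permMat,  Matrix.one_apply]
  rw [Finset.sum_eq_single (σ k)]
  · simp [permMat, eq_comm, σ.injective.eq_iff]
  · intro b _ hb; simp [Ne.symm hb]
  · simp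

noncomputable def flipMat (i : Fin d) : Matrix (Fin d) (Fin d) ℝ :=
  Matrix.diagonal (fun k => if k = i then -1 else 1)

lemma flipMat_mulVec (i : Fin d) (v : Fin d → ℝ) :
    (flipMat i).mulVec v = fun k => (if k = i then -1 else 1) * v k := by
  funext k
  simp [flipMat, Matrix.mulVec_diagonal]

lemma flipMat_mem (i : Fin d) : flipMat i ∈ Matrix.orthogonalGroup (Fin d) ℝ := by
  rw [Matrix.mem_orthogonalGroup_iff]
  have : (flipMat i)ᵀ = flipMat i := by
    simp [flipMat, Matrix.diagonal_transpose]
  rw [this, flipMat, Matrix.diagonal_mul_diagonal]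
  ext k l
  by_cases h : k = i <;> simp [Matrix.diagonal, Matrix.one_apply, h]

variable {ν : Measure (Fin d → ℝ)}

lemma continuous_sqnorm : Continuous (sqnorm (d := d)) := by
  unfold sqnorm
  exact continuous_finset_sum _ fun j _ => (continuous_apply j).pow 2

lemma continuous_mulVec (Q : Matrix (Fin d) (Fin d) ℝ) :
    Continuous (fun v : Fin d → ℝ => Q.mulVec v) := by
  have : (fun v : Fin d → ℝ => Q.mulVec v) = Q.mulVecLin := by
    funext v; simp [Matrix.mulVecLin_apply]
  rw [this]
  exact Q.mulVecLin.continuous_of_finiteDimensional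

lemma ae_sphere (hν : IsUniformOnSphere ν) : ∀ᵐ v ∂ν, sqnorm v = 1 := by
  haveI := hν.1
  rw [ae_iff]
  have hS : MeasurableSet {v : Fin d → ℝ | sqnorm v = 1} :=
    continuous_sqnorm.measurable (measurableSet_singleton 1)
  have := measure_compl hS (measure_ne_top ν _)
  simp only [hν.2.1, measure_univ] at this
  rw [tsub_self] at this
  exact this

lemma integral_comp_orth (hν : IsUniformOnSphere ν) {Q : Matrix (Fin d) (Fin d) ℝ}
    (hQ : Q ∈ Matrix.orthogonalGroup (Fin d) ℝ) {f : (Fin d → ℝ) → ℝ} (hf : Continuous f) :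
    ∫ v, f (Q.mulVec v) ∂ν = ∫ v, f v ∂ν := by
  conv_rhs => rw [← hν.2.2 Q hQ]
  rw [integral_map (continuous_mulVec Q).aemeasurable hf.aestronglyMeasurable]

lemma integrable_of_bdd (hν : IsUniformOnSphere ν) {f : (Fin d → ℝ) → ℝ} (hf : Continuous f)
    {C : ℝ} (hb : ∀ v, sqnorm v = 1 → |f v| ≤ C) : Integrable f ν := by
  haveI := hν.1
  refine Integrable.mono' (integrable_const C) hf.aestronglyMeasurable ?_
  filter_upwards [ae_sphere hν] with v hv
  simpa using hb v hv

lemma moment (hν : IsUniformOnSphere ν) (hd : 1 ≤ d) (i j : Fin d) :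
    ∫ v, v i * v j ∂ν = if i = j then 1 / (d : ℝ) else 0 := by
  have hint : ∀ k l : Fin d, Integrable (fun v => v k * v l) ν := by
    intro k l
    refine integrable_of_bdd hν (by continuity) (C := 1) ?_
    intro v hv
    have h1 : v k ^ 2 ≤ 1 := by
      rw [← hv]; unfold sqnorm
      exact Finset.single_le_sum (f := fun m => v m ^ 2) (fun m _ => sq_nonneg _) (Finset.mem_univ k)
    have h2 : v l ^ 2 ≤ 1 := by
      rw [← hv]; unfold sqnorm
      exact Finset.single_le_sum (f := fun m => v m ^ 2) (fun m _ => sq_nonneg _) (Finset.mem_univ l)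
    have := abs_mul (v k) (v l)
    nlinarith [abs_nonneg (v k), abs_nonneg (v l), sq_abs (v k), sq_abs (v l),
      abs_le_one_iff_mul_self_le_one (a := v k)]
  by_cases h : i = j
  · subst h
    simp only [if_pos rfl]
    -- all coordinates have equal second moment
    have heq : ∀ k : Fin d, ∫ v, v k * v k ∂ν = ∫ v, v i * v i ∂ν := by
      intro k
      have := integral_comp_orth hν (permMat_mem (Equiv.swap i k)) (f := fun v => v i * v i)
        (by continuity)
      rw [← this]
      simp only [permMat_mulVec, Equiv.swap_apply_left]
    have hsum : ∑ k : Fin d, ∫ v, v k * v k ∂ν = 1 := by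
      rw [← integral_finset_sum _ (fun k _ => hint k k)]
      have : ∫ v, ∑ k, v k * v k ∂ν = ∫ v, (1:ℝ) ∂ν := by
        refine integral_congr_ae ?_
        filter_upwards [ae_sphere hν] with v hv
        rw [← hv]; unfold sqnorm; simp [sq]
      rw [this]
      haveI := hν.1
      simp
    rw [Finset.sum_congr rfl (fun k _ => heq k)] at hsum
    simp only [Finset.sum_const, Finset.card_univ, Fintype.card_fin, nsmul_eq_mul] at hsum
    have hd0 : (d : ℝ) ≠ 0 := by positivity
    rw [if_pos trivial, eq_div_iff hd0, mul_comm]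
    exact hsum
  · simp only [if_neg h]
    have key := integral_comp_orth hν (flipMat_mem i) (f := fun v => v i * v j) (by continuity)
    have heq : ∫ v, (fun v => v i * v j) ((flipMat i).mulVec v) ∂ν = ∫ v, -(v i * v j) ∂ν := by
      refine integral_congr_ae (Filter.Eventually.of_forall fun v => ?_)
      simp [flipMat_mulVec, Ne.symm h]
    rw [heq, integral_neg] at key
    linarith


lemma expand_sq (c : ℝ) (w z : Fin d → ℝ) :
    ∑ j, (c * w j - z j) ^ 2
      = c ^ 2 * sqnorm w - 2 * c * (∑ j, w j * z j) + sqnorm z := by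
  unfold sqnorm
  rw [Finset.mul_sum, Finset.mul_sum, ← Finset.sum_sub_distrib, ← Finset.sum_add_distrib]
  exact Finset.sum_congr rfl fun j _ => by ring

lemma abs_dot_le_one {a b : Fin d → ℝ} (ha : sqnorm a = 1) (hb : sqnorm b = 1) :
    |∑ j, a j * b j| ≤ 1 := by
  have h := Finset.sum_mul_sq_le_sq_mul_sq Finset.univ a b
  rw [show (∑ j, a j ^ 2) = sqnorm a from rfl, show (∑ j, b j ^ 2) = sqnorm b from rfl,
    ha, hb, mul_one] at h
  nlinarith [abs_nonneg (∑ j, a j * b j), sq_abs (∑ j, a j * b j)]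

lemma cones_subset_zero {a b : Fin d → ℝ} {δ : ℝ} (hδ : 0 < δ)
    (ha : sqnorm a = 1) (hb : sqnorm b = 1)
    (hab : ∑ j, a j * b j < 1 - 4 * δ) :
    cone a δ ∩ cone b δ ⊆ {0} := by
  rintro v ⟨h1, h2⟩
  simp only [Set.mem_singleton_iff]
  by_contra hv
  have hvpos : 0 < sqnorm v := by
    rcases Function.ne_iff.mp hv with ⟨j, hj⟩
    refine Finset.sum_pos' (fun m _ => sq_nonneg _) ⟨j, Finset.mem_univ j, ?_⟩
    exact pow_pos (abs_pos.mpr hj) 2 |>.trans_le (by rw [sq_abs])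
  set n := vnorm v with hn
  have hn2 : n ^ 2 = sqnorm v := sq_vnorm v
  have hnpos : 0 < n := Real.sqrt_pos.mpr hvpos
  have h1' : (1 - δ) * n ≤ ∑ j, a j * v j := h1
  have h2' : (1 - δ) * n ≤ ∑ j, b j * v j := h2
  have eA := expand_sq n a v
  have eB := expand_sq n b v
  have eAB : ∑ j, (n * a j - n * b j) ^ 2
      = n ^ 2 * sqnorm a - 2 * n * (n * ∑ j, a j * b j) + n ^ 2 * sqnorm b := by
    have hs1 : ∑ j, a j * (n * b j) = n * ∑ j, a j * b j := by
      rw [Finset.mul_sum]; exact Finset.sum_congr rfl fun j _ => by ring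
    have hs2 : sqnorm (fun j => n * b j) = n ^ 2 * sqnorm b := by
      unfold sqnorm; rw [Finset.mul_sum]; exact Finset.sum_congr rfl fun j _ => by ring
    rw [expand_sq n a (fun j => n * b j), hs1, hs2]
  have tri : ∑ j, (n * a j - n * b j) ^ 2
      ≤ ∑ j, (2 * (n * a j - v j) ^ 2 + 2 * (n * b j - v j) ^ 2) := by
    refine Finset.sum_le_sum fun j _ => ?_
    nlinarith [sq_nonneg ((n * a j - v j) - (n * b j - v j)), sq_nonneg ((n * a j - v j) + (n * b j - v j))]
  rw [Finset.sum_add_distrib, ← Finset.mul_sum, ← Finset.mul_sum] at tri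
  have hA : ∑ j, (n * a j - v j) ^ 2 ≤ 2 * δ * n ^ 2 := by
    rw [eA, ha, ← hn2]; nlinarith
  have hB : ∑ j, (n * b j - v j) ^ 2 ≤ 2 * δ * n ^ 2 := by
    rw [eB, hb, ← hn2]; nlinarith
  rw [eAB, ha, hb] at tri
  nlinarith [sq_nonneg n]

lemma integrable_mul_coord (hν : IsUniformOnSphere ν) (k l : Fin d) :
    Integrable (fun v => v k * v l) ν := by
  refine integrable_of_bdd hν (by continuity) (C := 1) ?_
  intro v hv
  have h1 : v k ^ 2 ≤ 1 := by
    rw [← hv]; unfold sqnorm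
    exact Finset.single_le_sum (f := fun m => v m ^ 2) (fun m _ => sq_nonneg _) (Finset.mem_univ k)
  have h2 : v l ^ 2 ≤ 1 := by
    rw [← hv]; unfold sqnorm
    exact Finset.single_le_sum (f := fun m => v m ^ 2) (fun m _ => sq_nonneg _) (Finset.mem_univ l)
  rw [abs_mul]
  nlinarith [abs_nonneg (v k), abs_nonneg (v l), sq_abs (v k), sq_abs (v l)]

lemma integral_Y (hν : IsUniformOnSphere ν) (hd : 1 ≤ d)
    (Q Q' : Matrix (Fin d) (Fin d) ℝ) :
    ∫ u, ∑ j, Q'.mulVec u j * Q.mulVec u j ∂ν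
      = (∑ j, ∑ k, Q' j k * Q j k) / d := by
  have hexp : (fun u : Fin d → ℝ => ∑ j, Q'.mulVec u j * Q.mulVec u j)
      = fun u => ∑ j, ∑ k, ∑ l, Q' j k * Q j l * (u k * u l) := by
    funext u
    refine Finset.sum_congr rfl fun j _ => ?_
    rw [Matrix.mulVec, Matrix.mulVec, dotProduct, dotProduct, Finset.sum_mul_sum]
    exact Finset.sum_congr rfl fun k _ => Finset.sum_congr rfl fun l _ => by ring
  have hI : ∀ (j k l : Fin d), Integrable (fun u : Fin d → ℝ => Q' j k * Q j l * (u k * u l)) ν :=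
    fun j k l => (integrable_mul_coord hν k l).const_mul _
  rw [hexp, integral_finset_sum _ (fun j _ =>
    integrable_finset_sum _ (fun k _ => integrable_finset_sum _ (fun l _ => hI j k l)))]
  have step : ∀ j : Fin d, ∫ u, ∑ k, ∑ l, Q' j k * Q j l * (u k * u l) ∂ν
      = ∑ k, Q' j k * Q j k * (1 / d) := by
    intro j
    rw [integral_finset_sum _ (fun k _ => integrable_finset_sum _ (fun l _ => hI j k l))]
    refine Finset.sum_congr rfl fun k _ => ?_
    rw [integral_finset_sum _ (fun l _ => hI j k l)]
    have : ∀ l : Fin d, ∫ u, Q' j k * Q j l * (u k * u l) ∂ν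
        = Q' j k * Q j l * (if k = l then 1 / (d : ℝ) else 0) := by
      intro l
      rw [MeasureTheory.integral_const_mul, moment hν hd k l]
    simp only [this, mul_ite, mul_zero]
    simp [Finset.sum_ite_eq]
  rw [Finset.sum_congr rfl (fun j _ => step j), Finset.sum_div]
  refine Finset.sum_congr rfl fun j _ => ?_
  rw [Finset.sum_div]
  exact Finset.sum_congr rfl fun k _ => by ring


/-- if `Q, Q'` are orthogonal and `δ ≤ ‖Q' − Q‖_F²/(12 d)`, then for `u`
uniform on the unit sphere, the cones `C(Q'u,δ)` and `C(Qu,δ)` intersect only at the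
origin with probability at least `δ`. -/
theorem cones_disjoint_probability (d : ℕ) (hd : 1 ≤ d)
    (Q Q' : Matrix (Fin d) (Fin d) ℝ)
    (hQ : Q ∈ Matrix.orthogonalGroup (Fin d) ℝ) (hQ' : Q' ∈ Matrix.orthogonalGroup (Fin d) ℝ)
    (δ : ℝ) (hδpos : 0 < δ)
    (hδ : δ ≤ (∑ i, ∑ j, (Q' i j - Q i j) ^ 2) / (12 * d))
    (ν : Measure (Fin d → ℝ)) (hν : IsUniformOnSphere ν) :
    ENNReal.ofReal δ
      ≤ ν {u | cone (Q'.mulVec u) δ ∩ cone (Q.mulVec u) δ ⊆ {0}} := by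
  haveI := hν.1
  have hdpos : (0:ℝ) < d := by exact_mod_cast hd
  set Y : (Fin d → ℝ) → ℝ := fun u => ∑ j, Q'.mulVec u j * Q.mulVec u j with hY
  have hYcont : Continuous Y := by
    refine continuous_finset_sum _ fun j _ => Continuous.mul ?_ ?_
    · exact (continuous_apply j).comp (continuous_mulVec Q')
    · exact (continuous_apply j).comp (continuous_mulVec Q)
  -- trace identity
  have hT : ∑ i, ∑ j, (Q' i j - Q i j) ^ 2
      = 2 * d - 2 * ∑ j, ∑ k, Q' j k * Q j k := by
    have e1 := sum_sq_entries hQ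
    have e2 := sum_sq_entries hQ'
    have : ∀ i j : Fin d, (Q' i j - Q i j) ^ 2 = Q' i j ^ 2 - 2 * (Q' i j * Q i j) + Q i j ^ 2 := by
      intro i j; ring
    simp only [this, Finset.sum_add_distrib, Finset.sum_sub_distrib, ← Finset.mul_sum] at *
    rw [e1, e2]; ring
  set T : ℝ := ∑ j, ∑ k, Q' j k * Q j k with hTdef
  have hδT : 6 * δ * d ≤ d - T := by
    rw [hT] at hδ
    have h12 : (0:ℝ) < 12 * (d:ℝ) := by positivity
    have := (le_div_iff₀ h12).mp hδ
    nlinarith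
  -- expectation of 1 - Y
  have hEY : ∫ u, Y u ∂ν = T / d := integral_Y hν hd Q Q'
  -- a.e. bound |Y| ≤ 1
  have hYb : ∀ u : Fin d → ℝ, sqnorm u = 1 → |Y u| ≤ 1 := by
    intro u hu
    exact abs_dot_le_one (by rw [sqnorm_mulVec hQ' u, hu]) (by rw [sqnorm_mulVec hQ u, hu])
  have hYint : Integrable Y ν := integrable_of_bdd hν hYcont hYb
  -- the event
  set S : Set (Fin d → ℝ) := {v | sqnorm v = 1} with hSdef
  have hSmeas : MeasurableSet S := continuous_sqnorm.measurable (measurableSet_singleton 1)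
  set A : Set (Fin d → ℝ) := {u | Y u < 1 - 4 * δ} ∩ S with hAdef
  have hAmeas : MeasurableSet A :=
    (measurableSet_lt hYcont.measurable measurable_const).inter hSmeas
  -- A ⊆ target
  have hsub : A ⊆ {u | cone (Q'.mulVec u) δ ∩ cone (Q.mulVec u) δ ⊆ {0}} := by
    rintro u ⟨hu1, hu2⟩
    exact cones_subset_zero hδpos (by rw [sqnorm_mulVec hQ' u, hu2])
      (by rw [sqnorm_mulVec hQ u, hu2]) hu1
  -- Markov: 1 - Y ≤ 2 * 1_A + 4δ a.e.
  have hbound : ∀ᵐ u ∂ν, 1 - Y u ≤ A.indicator (fun _ => (2:ℝ)) u + 4 * δ := by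
    filter_upwards [ae_sphere hν] with u hu
    by_cases hA : u ∈ A
    · rw [Set.indicator_of_mem hA]
      have := hYb u hu
      rw [abs_le] at this
      linarith [this.1]
    · rw [Set.indicator_of_notMem hA]
      have : ¬ Y u < 1 - 4 * δ := fun hc => hA ⟨hc, hu⟩
      push_neg at this
      linarith
  have hIndInt : Integrable (fun u => A.indicator (fun _ => (2:ℝ)) u + 4 * δ) ν := by
    exact ((integrable_const (2:ℝ)).indicator hAmeas).add (integrable_const _)
  have hEX : 6 * δ ≤ ∫ u, (1 - Y u) ∂ν := by
    rw [integral_sub (integrable_const 1) hYint, integral_const, hEY]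
    simp only [probReal_univ, measure_univ, ENNReal.toReal_one, smul_eq_mul, one_mul]
    rw [← sub_nonneg]
    have he : 1 - T / (d:ℝ) - 6 * δ = ((d - T) - 6 * δ * d) / d := by
      field_simp
    rw [he]
    exact div_nonneg (by linarith) hdpos.le
  have hint : ∫ u, (1 - Y u) ∂ν ≤ 2 * (ν A).toReal + 4 * δ := by
    have := integral_mono_ae ((integrable_const 1).sub hYint) hIndInt hbound
    rw [integral_add ((integrable_const (2:ℝ)).indicator hAmeas) (integrable_const _),
      integral_indicator_const _ hAmeas, integral_const] at this
    simp only [probReal_univ, measureReal_def, measure_univ, ENNReal.toReal_one, smul_eq_mul, one_mul, Pi.sub_apply] at this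
    linarith
  have hνA : δ ≤ (ν A).toReal := by linarith
  calc ENNReal.ofReal δ ≤ ν A := by
        rw [← ENNReal.ofReal_toReal (measure_ne_top ν A)]
        exact ENNReal.ofReal_le_ofReal hνA
    _ ≤ _ := measure_mono hsub
end PW
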